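/- The 3×3 matrix A = [[0,1,1],[2,0,1],[-1,-1,0]] is a semimonotone star matrix, but its transpose Aᵀ is not a semimonotone star matrix. -/

import Mathlib

/-- A is semimonotone (E₀). -/
def IsSemimonotone {n : ℕ} (A : Matrix (Fin n) (Fin n) ℝ) : Prop :=
  ∀ x : Fin n → ℝ, 0 ≤ x → x ≠ 0 → ∃ i, 0 < x i ∧ 0 ≤ A.mulVec x i

/-- A is semimonotone star (E₀ˢ). -/
def IsSemimonotoneStar {n : ℕ} (A : Matrix (Fin n) (Fin n) ℝ) : Prop :=
  IsSemimonotone A ∧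
    ∀ x : Fin n → ℝ, 0 ≤ x → 0 ≤ A.mulVec x → dotProduct x (A.mulVec x) = 0 →
      A.transpose.mulVec x ≤ 0

theorem stmt3 :
    IsSemimonotoneStar !![(0 : ℝ), 1, 1; 2, 0, 1; -1, -1, 0] ∧
      ¬ IsSemimonotoneStar (!![(0 : ℝ), 1, 1; 2, 0, 1; -1, -1, 0]).transpose := by
  constructor
  · constructor
    · intro x hx hne
      have h0 : (0:ℝ) ≤ x 0 := hx 0
      have h1 : (0:ℝ) ≤ x 1 := hx 1
      have h2 : (0:ℝ) ≤ x 2 := hx 2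
      rcases lt_or_eq_of_le h0 with h0' | h0'
      · refine ⟨0, h0', ?_⟩
        simp [Matrix.mulVec, dotProduct, Fin.sum_univ_three]
        linarith
      · rcases lt_or_eq_of_le h1 with h1' | h1'
        · refine ⟨1, h1', ?_⟩
          simp [Matrix.mulVec, dotProduct, Fin.sum_univ_three]
          linarith
        · rcases lt_or_eq_of_le h2 with h2' | h2'
          · refine ⟨2, h2', ?_⟩
            simp [Matrix.mulVec, dotProduct, Fin.sum_univ_three]
            linarith
          · exfalso
            apply hne
            funext i
            fin_cases i <;> simp <;> linarith
    · intro x hx hAx _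
      have h0 : (0:ℝ) ≤ x 0 := hx 0
      have h1 : (0:ℝ) ≤ x 1 := hx 1
      have h2 : (0:ℝ) ≤ x 2 := hx 2
      have hr2 : (0:ℝ) ≤ _ := hAx 2
      simp [Matrix.mulVec, dotProduct, Fin.sum_univ_three] at hr2
      intro i
      fin_cases i <;>
        simp [Matrix.mulVec, dotProduct, Matrix.transpose, Fin.sum_univ_three] <;>
        linarith
  · intro h
    have := h.2 ![1, 0, 0] (by intro i; fin_cases i <;> norm_num)
      (by intro i; fin_cases i <;>
            simp [Matrix.mulVec, dotProduct, Matrix.transpose, Fin.sum_univ_three])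
      (by simp [Matrix.mulVec, dotProduct, Matrix.transpose, Fin.sum_univ_three])
    have h1 := this 1
    simp [Matrix.mulVec, dotProduct, Matrix.transpose, Fin.sum_univ_three] at h1
    linarith
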